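/- arXiv:2301.07328 — 4 statements merged into one kernel-verified Lean document; each statement's English description precedes it below -/
import Mathlib

section
/- Let X be a finite-dimensional real inner product space, D a symmetric positive semidefinite linear operator on X, and L a symmetric linear operator on X. If λ ∈ ℂ with Re λ > 0 is an eigenvalue of the quadratic pencil, i.e. there exists a nonzero u in the complexification of X with λ²u + λDu + Lu = 0, then λ is real. -/
/-- If `D` is a (complexified) symmetric positive semidefinite operator and `L`
a (complexified) symmetric operator on a finite-dimensional inner product space, then any
eigenvalue `λ` of the quadratic pencil `λ² + λD + L` with `Re λ > 0` is real. -/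
theorem pencil_unstable_eigenvalue_real
    {E : Type*} [NormedAddCommGroup E] [InnerProductSpace ℂ E] [FiniteDimensional ℂ E]
    (D L : E →ₗ[ℂ] E)
    (hDsym : ∀ u v : E, inner ℂ (D u) v = (inner ℂ u (D v) : ℂ))
    (hLsym : ∀ u v : E, inner ℂ (L u) v = (inner ℂ u (L v) : ℂ))
    (hDpos : ∀ u : E, 0 ≤ (inner ℂ (D u) u : ℂ).re)
    (lam : ℂ) (hre : 0 < lam.re)
    (u : E) (hu : u ≠ 0)
    (heq : lam ^ 2 • u + lam • D u + L u = 0) :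
    lam.im = 0 := by
  have h0 : (inner ℂ u (lam ^ 2 • u + lam • D u + L u) : ℂ) = 0 := by
    rw [heq, inner_zero_right]
  rw [inner_add_right, inner_add_right, inner_smul_right, inner_smul_right] at h0
  -- realness of ⟨u, Du⟩
  have hd : (inner ℂ u (D u) : ℂ).im = 0 := by
    have : (starRingEnd ℂ) (inner ℂ u (D u)) = inner ℂ u (D u) := by
      rw [inner_conj_symm, hDsym]
    exact Complex.conj_eq_iff_im.mp this
  have hl : (inner ℂ u (L u) : ℂ).im = 0 := by
    have : (starRingEnd ℂ) (inner ℂ u (L u)) = inner ℂ u (L u) := by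
      rw [inner_conj_symm, hLsym]
    exact Complex.conj_eq_iff_im.mp this
  have hdre : 0 ≤ (inner ℂ u (D u) : ℂ).re := by
    have := hDpos u
    rwa [← inner_conj_symm, Complex.conj_re] at this
  have hn : (0:ℝ) < (inner ℂ u u : ℂ).re := by
    have h := inner_self_eq_norm_sq (𝕜 := ℂ) u
    rw [RCLike.re_to_complex] at h
    rw [h]
    exact pow_pos (norm_pos_iff.mpr hu) 2
  have hni : (inner ℂ u u : ℂ).im = 0 := by
    rw [inner_self_eq_norm_sq_to_K]; simp [pow_two]
  have him : ((lam ^ 2 * inner ℂ u u + lam * inner ℂ u (D u) + inner ℂ u (L u) : ℂ)).im = 0 := by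
    rw [h0]; simp
  simp only [Complex.add_im, Complex.mul_im, Complex.mul_re, pow_two, hni, hl, hd,
    mul_zero, zero_mul, add_zero, Complex.add_re, Complex.add_im] at him
  -- him : (lam.re * lam.im + lam.im * lam.re) * (inner ℂ u u).re + lam.im * (inner ℂ u (D u)).re = 0
  have hfac : lam.im * (2 * lam.re * (inner ℂ u u : ℂ).re + (inner ℂ u (D u) : ℂ).re) = 0 := by
    linear_combination him
  have hpos : 0 < 2 * lam.re * (inner ℂ u u : ℂ).re + (inner ℂ u (D u) : ℂ).re := by
    nlinarith [mul_pos hre hn]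
  exact (mul_eq_zero.mp hfac).resolve_right (ne_of_gt hpos)
end

section
/- Let X be a finite-dimensional real inner product space and L a symmetric invertible linear operator on X. Consider the block operator A = [[0, I], [-L, 0]] acting on X × X. Then the number of eigenvalues of (the complexification of) A with strictly positive real part, counted with algebraic multiplicity, equals the number of negative eigenvalues of L counted with multiplicity. -/
open TensorProduct Module

section Aux

variable {K V ι : Type*} [Field K] [AddCommGroup V] [Module K V]

lemma aux_repr_step (b : Basis ι K V) (f : Module.End K V) (d : ι → K)
    (hb : ∀ i, f (b i) = d i • b i) (x : V) (i : ι) :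
    b.repr (f x) i = d i * b.repr x i := by
  classical
  have h : (b.coord i) ∘ₗ f = d i • b.coord i := by
    apply b.ext
    intro j
    simp only [LinearMap.comp_apply, LinearMap.smul_apply, Basis.coord_apply, hb j,
      map_smul, Finsupp.smul_apply, smul_eq_mul, Basis.repr_self, Finsupp.single_apply]
    by_cases hji : j = i <;> simp [hji]
  have h2 := LinearMap.congr_fun h x
  simpa [Basis.coord_apply] using h2

lemma aux_repr_pow (b : Basis ι K V) (f : Module.End K V) (d : ι → K)
    (hb : ∀ i, f (b i) = d i • b i) (c : K) (k : ℕ) (x : V) (i : ι) :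
    b.repr (((f - c • (1 : Module.End K V)) ^ k) x) i = (d i - c) ^ k * b.repr x i := by
  have hstep : ∀ y : V, b.repr ((f - c • (1 : Module.End K V)) y) i = (d i - c) * b.repr y i := by
    intro y
    have h1 : (f - c • (1 : Module.End K V)) y = f y - c • y := by
      simp [LinearMap.sub_apply]
    rw [h1, map_sub, map_smul, Finsupp.sub_apply, Finsupp.smul_apply,
      aux_repr_step b f d hb y i, smul_eq_mul, sub_mul]
  induction k generalizing x with
  | zero => simp
  | succ k ih =>
    rw [pow_succ, Module.End.mul_apply, ih ((f - c • (1 : Module.End K V)) x), hstep x]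
    ring

lemma aux_maxGen_eq_span [Fintype ι] (b : Basis ι K V) (f : Module.End K V) (d : ι → K)
    (hb : ∀ i, f (b i) = d i • b i) (c : K) :
    f.maxGenEigenspace c = Submodule.span K (⇑b '' {i | d i = c}) := by
  classical
  apply le_antisymm
  · intro x hx
    obtain ⟨k, hk⟩ := (Module.End.mem_maxGenEigenspace f c x).mp hx
    have hz : ∀ i, d i ≠ c → b.repr x i = 0 := by
      intro i hi
      have h := aux_repr_pow b f d hb c k x i
      rw [hk, map_zero, Finsupp.coe_zero, Pi.zero_apply] at h
      exact (mul_eq_zero.mp h.symm).resolve_left (pow_ne_zero _ (sub_ne_zero.mpr hi))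
    have hx' : ∑ i ∈ Finset.univ.filter (fun i => d i = c), b.repr x i • b i = x := by
      rw [Finset.sum_filter_of_ne]
      · exact b.sum_repr x
      · intro i _ hne
        by_contra hdc
        exact hne (by rw [hz i hdc, zero_smul])
    rw [← hx']
    exact Submodule.sum_mem _ fun i hi => Submodule.smul_mem _ _
      (Submodule.subset_span ⟨i, (Finset.mem_filter.mp hi).2, rfl⟩)
  · rw [Submodule.span_le]
    rintro y ⟨i, hi, rfl⟩
    rw [SetLike.mem_coe, Module.End.mem_maxGenEigenspace]
    refine ⟨1, ?_⟩
    have hi' : d i = c := hi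
    simp [pow_one, LinearMap.sub_apply, hb i, hi']

lemma aux_eigenspace_eq_span [Fintype ι] (b : Basis ι K V) (f : Module.End K V) (d : ι → K)
    (hb : ∀ i, f (b i) = d i • b i) (c : K) :
    f.eigenspace c = Submodule.span K (⇑b '' {i | d i = c}) := by
  apply le_antisymm
  · refine le_trans ?_ (le_of_eq (aux_maxGen_eq_span b f d hb c))
    intro x hx
    rw [Module.End.mem_eigenspace_iff] at hx
    rw [Module.End.mem_maxGenEigenspace]
    exact ⟨1, by simp [pow_one, LinearMap.sub_apply, hx]⟩
  · rw [Submodule.span_le]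
    rintro y ⟨i, hi, rfl⟩
    have hi' : d i = c := hi
    exact Module.End.mem_eigenspace_iff.mpr (by rw [hb i, hi'])

lemma aux_iSup_span {α ι' : Type*} (P : α → Prop) (g : ι' → α) (f : ι' → V) :
    (⨆ c : {c : α // P c}, Submodule.span K (f '' {i | g i = c.1}))
      = Submodule.span K (f '' {i | P (g i)}) := by
  apply le_antisymm
  · refine iSup_le fun c => Submodule.span_mono (Set.image_mono ?_)
    intro i hi
    have hi' : g i = c.1 := hi
    show P (g i)
    rw [hi']
    exact c.2
  · rw [Submodule.span_le]
    rintro y ⟨i, hi, rfl⟩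
    exact Submodule.mem_iSup_of_mem ⟨g i, hi⟩ (Submodule.subset_span ⟨i, rfl, rfl⟩)

lemma aux_finrank_span_image [Fintype ι] {f : ι → V} (hf : LinearIndependent K f)
    (s : Set ι) [Fintype s] :
    finrank K (Submodule.span K (f '' s)) = Fintype.card s := by
  rw [Set.image_eq_range]
  exact finrank_span_eq_card (hf.comp ((↑) : s → ι) Subtype.val_injective)

end Aux

/-- For `L` symmetric and invertible on a finite-dimensional real inner product
space `X`, the number of eigenvalues (counted with algebraic multiplicity) with positive real
part of the complexification of the block operator `A = [[0, I], [-L, 0]]` on `X × X` equals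
the number of negative eigenvalues of `L` counted with multiplicity. -/
theorem block_operator_unstable_count_eq_neg_index
    {X : Type*} [NormedAddCommGroup X] [InnerProductSpace ℝ X] [FiniteDimensional ℝ X]
    (L : X →ₗ[ℝ] X) (hLsym : L.IsSymmetric) (hLinv : Function.Bijective L)
    (A : (X × X) →ₗ[ℝ] (X × X))
    (hA : ∀ p : X × X, A p = (p.2, -(L p.1))) :
    Module.finrank ℂ ↥
        (⨆ lam : {lam : ℂ // 0 < lam.re},
          Module.End.maxGenEigenspace
            (LinearMap.baseChange ℂ A : Module.End ℂ (ℂ ⊗[ℝ] (X × X))) lam.1)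
      = Module.finrank ℝ
        ↥(⨆ mu : {mu : ℝ // mu < 0},
          Module.End.eigenspace (L : Module.End ℝ X) mu.1) := by
  classical
  set n := finrank ℝ X with hn
  let bX : Basis (Fin n) ℝ X := (hLsym.eigenvectorBasis rfl).toBasis
  let μ : Fin n → ℝ := hLsym.eigenvalues rfl
  have hv : ∀ i, L (bX i) = μ i • bX i := by
    intro i
    have h := hLsym.apply_eigenvectorBasis (rfl : finrank ℝ X = n) i
    rw [RCLike.ofReal_real_eq_id] at h
    rw [show bX i = (hLsym.eigenvectorBasis (rfl : finrank ℝ X = n)) i from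
      congrFun (hLsym.eigenvectorBasis (rfl : finrank ℝ X = n)).coe_toBasis i]
    exact h
  have hμ0 : ∀ i, μ i ≠ 0 := by
    intro i h
    have h1 : L (bX i) = L 0 := by rw [map_zero, hv i, h, zero_smul]
    exact bX.ne_zero i (hLinv.injective h1)
  -- the negative set
  set s : Set (Fin n) := {i | μ i < 0} with hs
  -- RHS
  have hRHS : (⨆ mu : {mu : ℝ // mu < 0}, Module.End.eigenspace (L : Module.End ℝ X) mu.1)
      = Submodule.span ℝ (⇑bX '' s) := by
    have h1 : ∀ mu : {mu : ℝ // mu < 0}, Module.End.eigenspace (L : Module.End ℝ X) mu.1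
        = Submodule.span ℝ (⇑bX '' {i | μ i = mu.1}) :=
      fun mu => aux_eigenspace_eq_span bX L μ hv mu.1
    rw [iSup_congr h1]
    exact aux_iSup_span _ μ ⇑bX
  -- complex side setup
  set B : Module.End ℂ (ℂ ⊗[ℝ] (X × X)) := LinearMap.baseChange ℂ A with hBdef
  let bP : Basis (Fin n ⊕ Fin n) ℝ (X × X) := bX.prod bX
  let cB : Basis (Fin n ⊕ Fin n) ℂ (ℂ ⊗[ℝ] (X × X)) := bP.baseChange ℂ
  let lam : Fin n → ℂ := fun i => if μ i < 0 then ((Real.sqrt (-μ i) : ℝ) : ℂ)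
    else Complex.I * ((Real.sqrt (μ i) : ℝ) : ℂ)
  have hlam_sq : ∀ i, lam i * lam i = (-(μ i) : ℂ) := by
    intro i
    by_cases h : μ i < 0
    · simp only [lam, if_pos h]
      rw [← Complex.ofReal_mul, Real.mul_self_sqrt (by linarith)]
      norm_cast
    · have hpos : 0 < μ i := lt_of_le_of_ne (not_lt.mp h) (Ne.symm (hμ0 i))
      simp only [lam, if_neg h]
      rw [mul_mul_mul_comm, Complex.I_mul_I, ← Complex.ofReal_mul,
        Real.mul_self_sqrt hpos.le]
      push_cast
      ring
  have hlam_ne : ∀ i, lam i ≠ 0 := by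
    intro i h
    have h2 := hlam_sq i
    rw [h, mul_zero] at h2
    have h3 : (μ i : ℂ) = 0 := by linear_combination h2
    exact hμ0 i (by exact_mod_cast h3)
  have hlam_re : ∀ i, (0 < (lam i).re ↔ μ i < 0) := by
    intro i
    by_cases h : μ i < 0
    · simp only [lam, if_pos h, Complex.ofReal_re]
      exact ⟨fun _ => h, fun _ => Real.sqrt_pos.mpr (by linarith)⟩
    · have hre : (Complex.I * ((Real.sqrt (μ i) : ℝ) : ℂ)).re = 0 := by
        simp [Complex.mul_re]
      simp only [lam, if_neg h, hre]
      simp [h]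
  have hlam_negre : ∀ i, ¬ (0 < (-lam i).re) := by
    intro i
    rw [Complex.neg_re]
    by_cases h : μ i < 0
    · simp only [lam, if_pos h, Complex.ofReal_re]
      have := Real.sqrt_nonneg (-μ i)
      linarith
    · have hre : (lam i).re = 0 := by
        simp only [lam, if_neg h]
        simp [Complex.mul_re]
      rw [hre]
      simp
  -- action of B on the complexified basis
  have hbP1 : ∀ i, bP (Sum.inl i) = (bX i, 0) := fun i => by simp [bP]
  have hbP2 : ∀ i, bP (Sum.inr i) = (0, bX i) := fun i => by simp [bP]
  have hBe1 : ∀ i, B (cB (Sum.inl i)) = (-(μ i) : ℂ) • cB (Sum.inr i) := by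
    intro i
    have h1 : cB (Sum.inl i) = 1 ⊗ₜ[ℝ] (bX i, 0) := by
      rw [show cB (Sum.inl i) = 1 ⊗ₜ[ℝ] bP (Sum.inl i) from bP.baseChange_apply ℂ _, hbP1 i]
    have h2 : cB (Sum.inr i) = 1 ⊗ₜ[ℝ] (0, bX i) := by
      rw [show cB (Sum.inr i) = 1 ⊗ₜ[ℝ] bP (Sum.inr i) from bP.baseChange_apply ℂ _, hbP2 i]
    have h4 : A (bX i, (0 : X)) = ((0 : X), -(μ i • bX i)) := by
      rw [hA]
      simp [hv i]
    have h3 : ((0 : X), -(μ i • bX i)) = (-(μ i)) • ((0 : X), bX i) := by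
      simp [Prod.smul_mk]
    rw [h1, h2, hBdef, LinearMap.baseChange_tmul, h4, h3, tmul_smul]
    rw [← algebraMap_smul ℂ (-(μ i)) ((1 : ℂ) ⊗ₜ[ℝ] ((0 : X), bX i)),
      show (algebraMap ℝ ℂ) (-(μ i)) = -((μ i : ℝ) : ℂ) by
        rw [congrFun Complex.coe_algebraMap (-(μ i))]; push_cast; ring]
  have hBe2 : ∀ i, B (cB (Sum.inr i)) = cB (Sum.inl i) := by
    intro i
    have h1 : cB (Sum.inl i) = 1 ⊗ₜ[ℝ] (bX i, 0) := by
      rw [show cB (Sum.inl i) = 1 ⊗ₜ[ℝ] bP (Sum.inl i) from bP.baseChange_apply ℂ _, hbP1 i]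
    have h2 : cB (Sum.inr i) = 1 ⊗ₜ[ℝ] (0, bX i) := by
      rw [show cB (Sum.inr i) = 1 ⊗ₜ[ℝ] bP (Sum.inr i) from bP.baseChange_apply ℂ _, hbP2 i]
    rw [h1, h2, hBdef, LinearMap.baseChange_tmul, hA]
    simp
  -- the eigenvector family of B
  set w : Fin n ⊕ Fin n → ℂ ⊗[ℝ] (X × X) :=
    Sum.elim (fun i => cB (Sum.inl i) + lam i • cB (Sum.inr i))
      (fun i => cB (Sum.inl i) - lam i • cB (Sum.inr i)) with hw
  set Lam : Fin n ⊕ Fin n → ℂ := Sum.elim lam (fun i => -lam i) with hLam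
  have hBw : ∀ j, B (w j) = Lam j • w j := by
    rintro (i | i)
    · simp only [hw, hLam, Sum.elim_inl, map_add, map_smul, hBe1 i, hBe2 i,
        smul_add, smul_smul, hlam_sq i]
      abel
    · simp only [hw, hLam, Sum.elim_inr, map_sub, map_smul, hBe1 i, hBe2 i]
      rw [show (-lam i) • (cB (Sum.inl i) - lam i • cB (Sum.inr i))
          = -(lam i • cB (Sum.inl i)) + (lam i * lam i) • cB (Sum.inr i) by module]
      rw [hlam_sq i]
      module
  -- w is a basis
  have hspan : ⊤ ≤ Submodule.span ℂ (Set.range w) := by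
    rw [← cB.span_eq]
    refine Submodule.span_le.mpr ?_
    rintro y ⟨j, rfl⟩
    cases j with
    | inl i =>
      have h1 : w (Sum.inl i) + w (Sum.inr i) = (2 : ℂ) • cB (Sum.inl i) := by
        simp only [hw, Sum.elim_inl, Sum.elim_inr]
        module
      have h1' : cB (Sum.inl i) = (2⁻¹ : ℂ) • (w (Sum.inl i) + w (Sum.inr i)) := by
        rw [h1, inv_smul_smul₀ two_ne_zero]
      rw [h1']
      exact Submodule.smul_mem _ _ (Submodule.add_mem _
        (Submodule.subset_span ⟨Sum.inl i, rfl⟩) (Submodule.subset_span ⟨Sum.inr i, rfl⟩))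
    | inr i =>
      have h2 : w (Sum.inl i) - w (Sum.inr i) = (2 * lam i) • cB (Sum.inr i) := by
        simp only [hw, Sum.elim_inl, Sum.elim_inr]
        module
      have h3 : cB (Sum.inr i) = (2 * lam i)⁻¹ • (w (Sum.inl i) - w (Sum.inr i)) := by
        rw [h2, inv_smul_smul₀ (mul_ne_zero two_ne_zero (hlam_ne i))]
      rw [h3]
      exact Submodule.smul_mem _ _ (Submodule.sub_mem _
        (Submodule.subset_span ⟨Sum.inl i, rfl⟩) (Submodule.subset_span ⟨Sum.inr i, rfl⟩))
  have hcard : Fintype.card (Fin n ⊕ Fin n) = finrank ℂ (ℂ ⊗[ℝ] (X × X)) := by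
    rw [Module.finrank_baseChange, Module.finrank_prod]
    simp [hn]
  let wB : Basis (Fin n ⊕ Fin n) ℂ (ℂ ⊗[ℝ] (X × X)) :=
    basisOfTopLeSpanOfCardEqFinrank w hspan hcard
  have hwB : ⇑wB = w := coe_basisOfTopLeSpanOfCardEqFinrank w hspan hcard
  -- LHS
  have hLHS : (⨆ lam' : {lam' : ℂ // 0 < lam'.re}, Module.End.maxGenEigenspace B lam'.1)
      = Submodule.span ℂ (w '' {j | 0 < (Lam j).re}) := by
    have h1 : ∀ c : {lam' : ℂ // 0 < lam'.re}, Module.End.maxGenEigenspace B c.1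
        = Submodule.span ℂ (w '' {j | Lam j = c.1}) := by
      intro c
      rw [← hwB]
      exact aux_maxGen_eq_span wB B Lam (fun j => by rw [hwB]; exact hBw j) c.1
    rw [iSup_congr h1]
    exact aux_iSup_span _ Lam w
  have hset : {j | 0 < (Lam j).re} = Sum.inl '' s := by
    ext j
    cases j with
    | inl i =>
      simp only [hLam, Set.mem_setOf_eq, Sum.elim_inl, Set.mem_image, hs]
      rw [hlam_re i]
      constructor
      · exact fun h => ⟨i, h, rfl⟩
      · rintro ⟨i', hi', hii⟩
        exact Sum.inl.inj hii ▸ hi'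
    | inr i =>
      simp only [hLam, Set.mem_setOf_eq, Sum.elim_inr, Set.mem_image, hs]
      constructor
      · exact fun h => absurd h (hlam_negre i)
      · rintro ⟨i', _, hii⟩
        exact absurd hii (by simp)
  haveI : Fintype ↥s := Fintype.ofFinite ↥s
  have hwinl : LinearIndependent ℂ (fun i : Fin n => w (Sum.inl i)) := by
    have h := wB.linearIndependent.comp Sum.inl Sum.inl_injective
    rw [hwB] at h
    exact h
  rw [hLHS, hRHS, hset, Set.image_image]
  rw [aux_finrank_span_image hwinl s, aux_finrank_span_image bX.linearIndependent s]
end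

section
/- (Hardy inequality, case k > 1) Let k > 1 be real and let g : (0,1) → ℝ be continuously differentiable with ∫₀¹ s^k (|g(s)|² + |g'(s)|²) ds < ∞. Then there exists a constant C, depending only on k, such that ∫₀¹ s^{k-2} |g(s)|² ds ≤ C ∫₀¹ s^k (|g(s)|² + |g'(s)|²) ds. -/
set_option maxHeartbeats 1000000

open MeasureTheory Real Set
open scoped NNReal ENNReal

/-- Hardy inequality, case `k > 1`: for `k > 1` there is a constant `C`
depending only on `k` such that for every `C¹` function `g` on `(0,1)`,
`∫₀¹ s^(k-2) |g|² ds ≤ C ∫₀¹ s^k (|g|² + |g'|²) ds`. -/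
theorem hardy_inequality_k_gt_one (k : ℝ) (hk : 1 < k) :
    ∃ C : ℝ≥0, ∀ g g' : ℝ → ℝ,
      (∀ s ∈ Ioo (0 : ℝ) 1, HasDerivAt g (g' s) s) →
      ContinuousOn g' (Ioo (0 : ℝ) 1) →
      (∫⁻ s in Ioo (0 : ℝ) 1, ENNReal.ofReal (s ^ k * (|g s| ^ 2 + |g' s| ^ 2))) < ⊤ →
      (∫⁻ s in Ioo (0 : ℝ) 1, ENNReal.ofReal (s ^ (k - 2) * |g s| ^ 2))
        ≤ C * ∫⁻ s in Ioo (0 : ℝ) 1, ENNReal.ofReal (s ^ k * (|g s| ^ 2 + |g' s| ^ 2)) := by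
  have hk1 : (0:ℝ) < k - 1 := by linarith
  refine ⟨(6 * 2 ^ k / (k-1) + 4 / (k-1)^2 + 4).toNNReal, ?_⟩
  intro g g' hg hg' hA
  simp only [sq_abs] at hA ⊢
  set f : ℝ → ℝ := fun s => s ^ k * (g s ^ 2 + g' s ^ 2) with hf_def
  have hgc : ContinuousOn g (Ioo (0:ℝ) 1) :=
    fun s hs => (hg s hs).continuousAt.continuousWithinAt
  have hrpow : ∀ p : ℝ, ContinuousOn (fun s : ℝ => s ^ p) (Ioo (0:ℝ) 1) :=
    fun p => ContinuousOn.rpow_const continuousOn_id (fun s hs => Or.inl (ne_of_gt hs.1))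
  have hf_cont : ContinuousOn f (Ioo (0:ℝ) 1) :=
    (hrpow k).mul ((hgc.pow 2).add (hg'.pow 2))
  have hf_nn : ∀ s ∈ Ioo (0:ℝ) 1, 0 ≤ f s := by
    intro s hs
    have : (0:ℝ) ≤ s ^ k := Real.rpow_nonneg hs.1.le k
    positivity
  have hf_nn' : 0 ≤ᵐ[volume.restrict (Ioo (0:ℝ) 1)] f :=
    (ae_restrict_iff' measurableSet_Ioo).2 (ae_of_all _ hf_nn)
  have hf_int : IntegrableOn f (Ioo (0:ℝ) 1) :=
    ⟨(hf_cont.aemeasurable measurableSet_Ioo).aestronglyMeasurable,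
      (hasFiniteIntegral_iff_ofReal hf_nn').2 hA⟩
  set A := ∫ s in Ioo (0:ℝ) 1, f s with hA_def
  have hA_nn : 0 ≤ A := setIntegral_nonneg measurableSet_Ioo hf_nn
  have hA_eq : ENNReal.ofReal A = ∫⁻ s in Ioo (0:ℝ) 1, ENNReal.ofReal (f s) :=
    ofReal_integral_eq_lintegral_ofReal hf_int hf_nn'
  -- subinterval (1/2, 1)
  have hhalf : Ioo (1/2 : ℝ) 1 ⊆ Ioo (0:ℝ) 1 := fun s hs => ⟨by linarith [hs.1], hs.2⟩
  have hg2_le : ∀ s ∈ Ioo (1/2:ℝ) 1, g s ^ 2 ≤ 2 ^ k * f s := by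
    intro s hs
    have hs0 : (0:ℝ) < s := by have := hs.1; linarith
    have h1 : ((1:ℝ)/2) ^ k ≤ s ^ k := Real.rpow_le_rpow (by norm_num) hs.1.le (by linarith)
    have h2 : (2:ℝ) ^ k * ((1:ℝ)/2) ^ k = 1 := by
      rw [← Real.mul_rpow (by norm_num) (by norm_num)]; norm_num
    have h2k : (0:ℝ) ≤ 2 ^ k := Real.rpow_nonneg (by norm_num) k
    have hsk : (0:ℝ) ≤ s ^ k := Real.rpow_nonneg hs0.le k
    have h3 : (1:ℝ) ≤ 2 ^ k * s ^ k := by nlinarith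
    simp only [hf_def]
    nlinarith [sq_nonneg (g s), sq_nonneg (g' s), mul_nonneg (mul_nonneg h2k hsk) (sq_nonneg (g' s)),
      mul_le_mul_of_nonneg_right h3 (sq_nonneg (g s))]
  have hg2_int : IntegrableOn (fun s => g s ^ 2) (Ioo (1/2:ℝ) 1) := by
    refine ((hf_int.mono_set hhalf).const_mul ((2:ℝ) ^ k)).mono'
      ((((hgc.mono hhalf).pow 2).aemeasurable measurableSet_Ioo).aestronglyMeasurable) ?_
    refine (ae_restrict_iff' measurableSet_Ioo).2 (ae_of_all _ fun s hs => ?_)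
    rw [Real.norm_eq_abs, abs_of_nonneg (sq_nonneg _)]
    exact hg2_le s hs
  set D := ∫ s in Ioo (1/2:ℝ) 1, g s ^ 2 with hD_def
  have hD_nn : 0 ≤ D := setIntegral_nonneg measurableSet_Ioo (fun s _ => sq_nonneg _)
  have hD_le : D ≤ 2 ^ k * A := by
    have h1 : D ≤ ∫ s in Ioo (1/2:ℝ) 1, 2 ^ k * f s :=
      setIntegral_mono_on hg2_int ((hf_int.mono_set hhalf).const_mul _) measurableSet_Ioo hg2_le
    have h2 : ∫ s in Ioo (1/2:ℝ) 1, 2 ^ k * f s = 2 ^ k * ∫ s in Ioo (1/2:ℝ) 1, f s :=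
      integral_const_mul _ _
    have h3 : ∫ s in Ioo (1/2:ℝ) 1, f s ≤ A :=
      setIntegral_mono_set hf_int hf_nn' (HasSubset.Subset.eventuallyLE hhalf)
    have h2k : (0:ℝ) ≤ 2 ^ k := Real.rpow_nonneg (by norm_num) k
    calc D ≤ 2 ^ k * ∫ s in Ioo (1/2:ℝ) 1, f s := h2 ▸ h1
      _ ≤ 2 ^ k * A := mul_le_mul_of_nonneg_left h3 h2k
  obtain ⟨t0, ht0, ht0g⟩ : ∃ t0 ∈ Ioo (1/2:ℝ) 1, g t0 ^ 2 ≤ 3 * D := by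
    by_contra hcon
    push_neg at hcon
    have h1 : ∫ s in Ioo (1/2:ℝ) 1, (3*D) ≤ D :=
      setIntegral_mono_on (integrableOn_const (by simp)) hg2_int
        measurableSet_Ioo (fun x hx => (hcon x hx).le)
    rw [setIntegral_const, measureReal_def, Real.volume_Ioo] at h1
    have hvol : (ENNReal.ofReal (1 - 1/2)).toReal = (1/2 : ℝ) := by
      rw [ENNReal.toReal_ofReal (by norm_num : (0:ℝ) ≤ 1 - 1/2)]; norm_num
    rw [hvol] at h1
    have hD0 : D = 0 := le_antisymm (by simp at h1; linarith) hD_nn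
    have hz : (fun s => g s ^ 2) =ᵐ[volume.restrict (Ioo (1/2:ℝ) 1)] 0 := by
      refine (integral_eq_zero_iff_of_nonneg_ae ?_ hg2_int).1 (hD0 ▸ hD_def.symm)
      exact ae_of_all _ fun s => sq_nonneg _
    have hfalse : ∀ᵐ s ∂volume.restrict (Ioo (1/2:ℝ) 1), False := by
      filter_upwards [hz, ae_restrict_mem measurableSet_Ioo] with s h1 h2
      have := hcon s h2
      rw [hD0] at this
      simp only [Pi.zero_apply] at h1
      linarith
    rw [Filter.eventually_false_iff_eq_bot, ae_eq_bot] at hfalse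
    have : volume.restrict (Ioo (1/2:ℝ) 1) (Ioo (1/2:ℝ) 1) = 0 := by rw [hfalse]; rfl
    rw [Measure.restrict_apply_self, Real.volume_Ioo] at this
    simp [ENNReal.ofReal_eq_zero] at this
    linarith
  have ht0pos : (0:ℝ) < t0 := by have := ht0.1; linarith
  -- key estimate on (a, t0)
  have key : ∀ a : ℝ, 0 < a → a < t0 →
      ∫ s in Ioo a t0, s ^ (k-2) * g s ^ 2 ≤ (6 / (k-1)) * D + (4 / (k-1)^2) * A := by
    intro a ha0 hat0
    have hat : a ≤ t0 := hat0.le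
    have hIcc : Icc a t0 ⊆ Ioo (0:ℝ) 1 :=
      fun s hs => ⟨lt_of_lt_of_le ha0 hs.1, lt_of_le_of_lt hs.2 ht0.2⟩
    have huIcc : uIcc a t0 = Icc a t0 := uIcc_of_le hat
    set φ : ℝ → ℝ := fun s => s ^ (k-1) * g s ^ 2 with hφ
    set φ' : ℝ → ℝ :=
      fun s => (k-1) * (s ^ (k-2) * g s ^ 2) + s ^ (k-1) * (2 * (g s * g' s)) with hφ'd
    have hderiv : ∀ s ∈ Icc a t0, HasDerivAt φ (φ' s) s := by
      intro s hs
      have hs0 : 0 < s := lt_of_lt_of_le ha0 hs.1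
      have h1 : HasDerivAt (fun x : ℝ => x ^ (k-1)) ((k-1) * s ^ (k-2)) s := by
        have h := Real.hasDerivAt_rpow_const (p := k-1) (Or.inl hs0.ne')
        have e : k - 1 - 1 = k - 2 := by ring
        rwa [e] at h
      have h2 : HasDerivAt (fun x => g x ^ 2) (2 * (g s * g' s)) s := by
        have h : HasDerivAt (fun x => g x ^ 2) (((2:ℕ):ℝ) * g s ^ (2-1) * g' s) s := (hg s (hIcc hs)).fun_pow 2
        convert h using 1
        push_cast
        ring
      have h3 : HasDerivAt (fun x => x ^ (k-1) * g x ^ 2)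
          ((k - 1) * s ^ (k - 2) * g s ^ 2 + s ^ (k - 1) * (2 * (g s * g' s))) s := h1.fun_mul h2
      convert h3 using 1
      simp only [hφ'd]
      ring
    -- continuity on Icc
    have hgC : ContinuousOn g (Icc a t0) := hgc.mono hIcc
    have hg'C : ContinuousOn g' (Icc a t0) := hg'.mono hIcc
    have hrp : ∀ p:ℝ, ContinuousOn (fun s:ℝ => s^p) (Icc a t0) := fun p => (hrpow p).mono hIcc
    have hc1 : ContinuousOn (fun s => s^(k-2) * g s^2) (Icc a t0) := (hrp _).mul (hgC.pow 2)
    have hc2 : ContinuousOn (fun s => s^(k-1) * (2*(g s * g' s))) (Icc a t0) :=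
      (hrp _).mul (continuousOn_const.mul (hgC.mul hg'C))
    have hc3 : ContinuousOn (fun s => s^k * g' s^2) (Icc a t0) := (hrp _).mul (hg'C.pow 2)
    have hφ'C : ContinuousOn φ' (Icc a t0) := (continuousOn_const.mul hc1).add hc2
    have hii1 : IntervalIntegrable (fun s => s^(k-2) * g s^2) volume a t0 :=
      ContinuousOn.intervalIntegrable (huIcc ▸ hc1)
    have hii2 : IntervalIntegrable (fun s => s^(k-1) * (2*(g s * g' s))) volume a t0 :=
      ContinuousOn.intervalIntegrable (huIcc ▸ hc2)
    have hii3 : IntervalIntegrable (fun s => s^k * g' s^2) volume a t0 :=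
      ContinuousOn.intervalIntegrable (huIcc ▸ hc3)
    have hftc : ∫ s in a..t0, φ' s = φ t0 - φ a :=
      intervalIntegral.integral_eq_sub_of_hasDerivAt (fun s hs => hderiv s (huIcc ▸ hs))
        (ContinuousOn.intervalIntegrable (huIcc ▸ hφ'C))
    set I := ∫ s in a..t0, s ^ (k-2) * g s ^ 2 with hI
    set J := ∫ s in a..t0, s ^ k * g' s ^ 2 with hJdef
    set K := ∫ s in a..t0, s ^ (k-1) * (2*(g s * g' s)) with hK
    have hsplit : ∫ s in a..t0, φ' s = (k-1) * I + K := by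
      rw [hφ'd]
      rw [intervalIntegral.integral_add (hii1.const_mul _) hii2,
        intervalIntegral.integral_const_mul]
    -- lower bound for K
    have hptw : ∀ s ∈ Icc a t0,
        -((k-1)/2 * (s^(k-2) * g s^2) + (2/(k-1)) * (s^k * g' s^2))
          ≤ s^(k-1) * (2*(g s * g' s)) := by
      intro s hs
      have hs0 : 0 < s := lt_of_lt_of_le ha0 hs.1
      set u := s ^ ((k-2)/2) with hu
      set v := s ^ (k/2) with hv
      have hu2 : u * u = s ^ (k-2) := by rw [hu, ← Real.rpow_add hs0]; ring_nf
      have hv2 : v * v = s ^ k := by rw [hv, ← Real.rpow_add hs0]; ring_nf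
      have huv : u * v = s ^ (k-1) := by rw [hu, hv, ← Real.rpow_add hs0]; ring_nf
      have hinv : (k-1)/2 * (2/(k-1)) = 1 := by field_simp
      rw [← hu2, ← hv2, ← huv]
      nlinarith [sq_nonneg ((k-1)/2 * (u*g s) + v*g' s), hk1, hinv,
        sq_nonneg (u*g s), sq_nonneg (v*g' s)]
    have hcL : ContinuousOn
        (fun s => -((k-1)/2 * (s^(k-2) * g s^2) + (2/(k-1)) * (s^k * g' s^2))) (Icc a t0) :=
      ((continuousOn_const.mul hc1).add (continuousOn_const.mul hc3)).neg
    have hiiL : IntervalIntegrable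
        (fun s => -((k-1)/2 * (s^(k-2) * g s^2) + (2/(k-1)) * (s^k * g' s^2))) volume a t0 :=
      ContinuousOn.intervalIntegrable (huIcc ▸ hcL)
    have hKlb : -((k-1)/2 * I + (2/(k-1)) * J) ≤ K := by
      have h := intervalIntegral.integral_mono_on hat hiiL hii2 hptw
      rw [intervalIntegral.integral_neg,
        intervalIntegral.integral_add (hii1.const_mul _) (hii3.const_mul _),
        intervalIntegral.integral_const_mul, intervalIntegral.integral_const_mul] at h
      exact h
    have hφt0 : φ t0 ≤ 3 * D := by
      have h1 : t0 ^ (k-1) ≤ 1 := Real.rpow_le_one ht0pos.le ht0.2.le (by linarith)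
      have h0 : (0:ℝ) ≤ t0 ^ (k-1) := Real.rpow_nonneg ht0pos.le _
      show t0 ^ (k-1) * g t0 ^ 2 ≤ 3 * D
      nlinarith [sq_nonneg (g t0), ht0g]
    have hφa : 0 ≤ φ a := mul_nonneg (Real.rpow_nonneg ha0.le _) (sq_nonneg _)
    have hJA : J ≤ A := by
      have hIoc : Ioc a t0 ⊆ Ioo (0:ℝ) 1 :=
        fun s hs => ⟨lt_trans ha0 hs.1, lt_of_le_of_lt hs.2 ht0.2⟩
      have hIocIcc : Ioc a t0 ⊆ Icc a t0 := Ioc_subset_Icc_self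
      rw [hJdef, intervalIntegral.integral_of_le hat]
      have h1 : ∫ s in Ioc a t0, s^k * g' s^2 ≤ ∫ s in Ioc a t0, f s := by
        refine setIntegral_mono_on ((hc3.integrableOn_Icc).mono_set hIocIcc)
          (hf_int.mono_set hIoc) measurableSet_Ioc (fun s hs => ?_)
        have hs0 : (0:ℝ) < s := lt_trans ha0 hs.1
        have hsk : (0:ℝ) ≤ s ^ k := Real.rpow_nonneg hs0.le _
        simp only [hf_def]
        nlinarith [mul_nonneg hsk (sq_nonneg (g s))]
      have h2 : ∫ s in Ioc a t0, f s ≤ A :=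
        setIntegral_mono_set hf_int hf_nn' (HasSubset.Subset.eventuallyLE hIoc)
      linarith
    -- combine
    have hIneq : (k-1)/2 * I ≤ 3 * D + (2/(k-1)) * A := by
      have h := hftc
      rw [hsplit] at h
      have : (k-1) * I = φ t0 - φ a - K := by linarith
      have h2k : 0 ≤ 2/(k-1) := by positivity
      nlinarith [mul_le_mul_of_nonneg_left hJA h2k]
    have hIfin : I ≤ (6 / (k-1)) * D + (4 / (k-1)^2) * A := by
      have hpos : (0:ℝ) < 2/(k-1) := by positivity
      have h := mul_le_mul_of_nonneg_left hIneq hpos.le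
      have e1 : 2/(k-1) * ((k-1)/2 * I) = I := by field_simp
      have e2 : 2/(k-1) * (3*D + 2/(k-1)*A) = 6/(k-1)*D + 4/(k-1)^2*A := by
        field_simp
        ring
      rw [e1, e2] at h
      exact h
    calc ∫ s in Ioo a t0, s ^ (k-2) * g s ^ 2
        = ∫ s in Ioc a t0, s ^ (k-2) * g s ^ 2 := (integral_Ioc_eq_integral_Ioo).symm
      _ = I := by rw [hI, intervalIntegral.integral_of_le hat]
      _ ≤ _ := hIfin
  -- piece 1 : lintegral over Ioo 0 t0
  have piece1 : (∫⁻ s in Ioo (0:ℝ) t0, ENNReal.ofReal (s ^ (k-2) * g s ^ 2))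
      ≤ ENNReal.ofReal ((6 / (k-1)) * D + (4 / (k-1)^2) * A) := by
    have hun : Ioo (0:ℝ) t0 = ⋃ n : ℕ, Ioo (t0 / (n+2)) t0 := by
      ext x
      simp only [mem_iUnion, mem_Ioo]
      constructor
      · rintro ⟨hx0, hxt⟩
        obtain ⟨n, hn⟩ := exists_nat_gt (t0 / x)
        refine ⟨n, ?_, hxt⟩
        rw [div_lt_iff₀ (by positivity)]
        rw [div_lt_iff₀ hx0] at hn
        nlinarith
      · rintro ⟨n, hn1, hn2⟩
        have : (0:ℝ) < t0 / (n+2) := by positivity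
        exact ⟨lt_trans this hn1, hn2⟩
    have hmono : Monotone (fun n : ℕ => Ioo (t0 / (n+2)) t0) := by
      intro m n hmn
      refine Ioo_subset_Ioo_left (div_le_div_of_nonneg_left ht0pos.le (by positivity) ?_)
      have : (m:ℝ) ≤ n := Nat.cast_le.2 hmn
      linarith
    rw [hun, setLIntegral_iUnion_of_directed _ hmono.directed_le]
    refine iSup_le fun n => ?_
    set a := t0 / ((n:ℝ)+2) with hadef
    have ha0 : 0 < a := by rw [hadef]; positivity
    have hat : a < t0 := by
      rw [hadef, div_lt_iff₀ (by positivity)]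
      nlinarith [mul_nonneg ht0pos.le (Nat.cast_nonneg (α := ℝ) n)]
    have hIcc : Icc a t0 ⊆ Ioo (0:ℝ) 1 :=
      fun s hs => ⟨lt_of_lt_of_le ha0 hs.1, lt_of_le_of_lt hs.2 ht0.2⟩
    have hc1 : ContinuousOn (fun s => s^(k-2) * g s^2) (Icc a t0) :=
      (((hrpow (k-2)).mono hIcc)).mul ((hgc.mono hIcc).pow 2)
    have hint : IntegrableOn (fun s => s^(k-2) * g s^2) (Ioo a t0) :=
      (hc1.integrableOn_Icc).mono_set Ioo_subset_Icc_self
    have hnn : 0 ≤ᵐ[volume.restrict (Ioo a t0)] (fun s => s^(k-2) * g s^2) := by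
      refine (ae_restrict_iff' measurableSet_Ioo).2 (ae_of_all _ fun s hs => ?_)
      have hs0 : (0:ℝ) < s := lt_trans ha0 hs.1
      exact mul_nonneg (Real.rpow_nonneg hs0.le _) (sq_nonneg _)
    rw [← ofReal_integral_eq_lintegral_ofReal hint hnn]
    exact ENNReal.ofReal_le_ofReal (key a ha0 hat)
  -- piece 2 : lintegral over Ico t0 1
  have piece2 : (∫⁻ s in Ico t0 (1:ℝ), ENNReal.ofReal (s ^ (k-2) * g s ^ 2))
      ≤ ENNReal.ofReal 4 * ∫⁻ s in Ioo (0:ℝ) 1, ENNReal.ofReal (f s) := by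
    have hsub : Ico t0 (1:ℝ) ⊆ Ioo (0:ℝ) 1 :=
      fun s hs => ⟨lt_of_lt_of_le ht0pos hs.1, hs.2⟩
    have h1 : (∫⁻ s in Ico t0 (1:ℝ), ENNReal.ofReal (s ^ (k-2) * g s ^ 2))
        ≤ ∫⁻ s in Ico t0 (1:ℝ), ENNReal.ofReal 4 * ENNReal.ofReal (f s) := by
      refine lintegral_mono_ae ((ae_restrict_iff' measurableSet_Ico).2
        (ae_of_all _ fun s hs => ?_))
      rw [← ENNReal.ofReal_mul (by norm_num)]
      refine ENNReal.ofReal_le_ofReal ?_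
      have hs1 : (1/2:ℝ) < s := lt_of_lt_of_le ht0.1 hs.1
      have hs0' : (0:ℝ) < s := by linarith
      have hpq : s ^ (k-2) * s ^ 2 = s ^ k := by
        rw [← Real.rpow_natCast s 2, ← Real.rpow_add hs0']; norm_num
      have hp : (0:ℝ) ≤ s ^ (k-2) := Real.rpow_nonneg hs0'.le _
      have h4 : (0:ℝ) ≤ 4*s^2 - 1 := by nlinarith
      simp only [hf_def]
      rw [← hpq]
      nlinarith [mul_nonneg (mul_nonneg hp (sq_nonneg (g s))) h4,
        mul_nonneg (mul_nonneg hp (sq_nonneg s)) (sq_nonneg (g' s))]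
    have h2 : (∫⁻ s in Ico t0 (1:ℝ), ENNReal.ofReal 4 * ENNReal.ofReal (f s))
        = ENNReal.ofReal 4 * ∫⁻ s in Ico t0 (1:ℝ), ENNReal.ofReal (f s) :=
      lintegral_const_mul' _ _ ENNReal.ofReal_ne_top
    have h3 : (∫⁻ s in Ico t0 (1:ℝ), ENNReal.ofReal (f s))
        ≤ ∫⁻ s in Ioo (0:ℝ) 1, ENNReal.ofReal (f s) := lintegral_mono_set hsub
    calc _ ≤ _ := h1
      _ = _ := h2
      _ ≤ _ := mul_le_mul_right h3 _
  -- assemble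
  have hsplitset : Ioo (0:ℝ) 1 = Ioo 0 t0 ∪ Ico t0 1 :=
    (Ioo_union_Ico_eq_Ioo ht0pos ht0.2.le).symm
  have hCreal : (0:ℝ) ≤ 6 * 2 ^ k / (k-1) + 4 / (k-1)^2 + 4 := by
    have h2k : (0:ℝ) ≤ 2 ^ k := Real.rpow_nonneg (by norm_num) k
    positivity
  have hgoal2 : (↑(6 * 2 ^ k / (k-1) + 4 / (k-1)^2 + 4).toNNReal : ℝ≥0∞)
      = ENNReal.ofReal (6 * 2 ^ k / (k-1) + 4 / (k-1)^2 + 4) := rfl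
  conv_lhs => rw [hsplitset]
  refine le_trans (lintegral_union_le _ _ _) (le_trans (add_le_add piece1 piece2) ?_)
  have hrhs : (∫⁻ s in Ioo (0:ℝ) 1, ENNReal.ofReal (s ^ k * (g s ^ 2 + g' s ^ 2)))
      = ∫⁻ s in Ioo (0:ℝ) 1, ENNReal.ofReal (f s) := rfl
  rw [hrhs, ← hA_eq, hgoal2, ← ENNReal.ofReal_mul hCreal,
    ← ENNReal.ofReal_mul (by norm_num : (0:ℝ) ≤ 4),
    ← ENNReal.ofReal_add (by positivity) (by positivity)]
  refine ENNReal.ofReal_le_ofReal ?_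
  have h1 : (6 / (k-1)) * D ≤ (6 / (k-1)) * (2^k * A) :=
    mul_le_mul_of_nonneg_left hD_le (by positivity)
  have h2 : (6 / (k-1)) * (2^k * A) = 6 * 2^k / (k-1) * A := by ring
  have h3 : (6 * 2 ^ k / (k-1) + 4 / (k-1)^2 + 4) * A
      = 6 * 2^k / (k-1) * A + 4 / (k-1)^2 * A + 4 * A := by ring
  linarith
end

section
/- (Hardy inequality, case k < 1) Let k < 1 be real and let g : (0,1] → ℝ be continuously differentiable with ∫₀¹ s^k |g'(s)|² ds < ∞ and ∫₀¹ s^k |g(s)|² ds < ∞. Then g extends continuously to s = 0 (i.e. the limit g(0) := lim_{s→0⁺} g(s) exists), and there is a constant C depending only on k with ∫₀¹ s^{k-2} |g(s) - g(0)|² ds ≤ C ∫₀¹ s^k |g'(s)|² ds. -/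
open MeasureTheory Real Set Filter
open scoped NNReal ENNReal Topology

private lemma lint_rpow_Ioo {t e : ℝ} (ht : 0 < t) (he : -1 < e) :
    ∫⁻ σ in Ioo (0:ℝ) t, ENNReal.ofReal (σ ^ e) = ENNReal.ofReal (t ^ (e+1) / (e+1)) := by
  have hint : IntegrableOn (fun σ : ℝ => σ ^ e) (Ioo 0 t) := by
    have := (intervalIntegral.intervalIntegrable_rpow' (a:=0) (b:=t) he)
    rw [intervalIntegrable_iff_integrableOn_Ioc_of_le ht.le] at this
    exact this.mono_set Ioo_subset_Ioc_self
  rw [← MeasureTheory.ofReal_integral_eq_lintegral_ofReal hint ?nn]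
  case nn =>
    filter_upwards [ae_restrict_mem measurableSet_Ioo] with σ hσ
    exact Real.rpow_nonneg hσ.1.le e
  congr 1
  rw [← integral_Ioc_eq_integral_Ioo, ← intervalIntegral.integral_of_le ht.le,
    integral_rpow (Or.inl he), Real.zero_rpow (by linarith)]
  ring

private lemma lint_rpow_Ioo_upper {σ q : ℝ} (hσ : 0 < σ) (hσ1 : σ < 1) (hq : q < -1) :
    ∫⁻ t in Ioo σ (1:ℝ), ENNReal.ofReal (t ^ q) ≤ ENNReal.ofReal (σ ^ (q+1) * (-(q+1))⁻¹) := by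
  have hcont : ContinuousOn (fun t : ℝ => t ^ q) (Icc σ 1) := fun x hx =>
    ((Real.continuousAt_rpow_const x q (Or.inl (by linarith [hx.1] : x ≠ 0)))).continuousWithinAt
  have hint : IntegrableOn (fun t : ℝ => t ^ q) (Ioo σ 1) := by
    have h2 := (hcont.mono (by rw [uIcc_of_le hσ1.le])).intervalIntegrable (μ := volume) (a := σ) (b := 1)
    rw [intervalIntegrable_iff_integrableOn_Ioc_of_le hσ1.le] at h2
    exact h2.mono_set Ioo_subset_Ioc_self
  rw [← MeasureTheory.ofReal_integral_eq_lintegral_ofReal hint ?nn]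
  case nn =>
    filter_upwards [ae_restrict_mem measurableSet_Ioo] with x hx
    exact Real.rpow_nonneg (by linarith [hx.1]) q
  apply ENNReal.ofReal_le_ofReal
  rw [← integral_Ioc_eq_integral_Ioo, ← intervalIntegral.integral_of_le hσ1.le,
    integral_rpow (Or.inr ⟨by linarith, by rw [uIcc_of_le hσ1.le]; intro h; exact absurd h.1 (by linarith)⟩)]
  rw [Real.one_rpow, inv_neg, div_eq_mul_inv]
  have hc : (q+1)⁻¹ < 0 := inv_lt_zero.2 (by linarith)
  nlinarith [hc]

private lemma lint_CS {μ : Measure ℝ} {u v : ℝ → ℝ≥0∞} (hu : AEMeasurable u μ) (hv : AEMeasurable v μ) :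
    (∫⁻ x, u x * v x ∂μ) ^ 2 ≤ (∫⁻ x, u x ^ 2 ∂μ) * (∫⁻ x, v x ^ 2 ∂μ) := by
  have h := ENNReal.lintegral_mul_le_Lp_mul_Lq μ Real.HolderConjugate.two_two hu hv
  have h2 : ∀ w : ℝ → ℝ≥0∞, ∫⁻ x, w x ^ (2:ℝ) ∂μ = ∫⁻ x, w x ^ 2 ∂μ := by
    intro w; apply lintegral_congr; intro x
    rw [← ENNReal.rpow_natCast (w x) 2]; norm_num
  rw [h2, h2] at h
  calc (∫⁻ x, u x * v x ∂μ) ^ 2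
      ≤ ((∫⁻ x, u x ^ 2 ∂μ) ^ (1/2:ℝ) * (∫⁻ x, v x ^ 2 ∂μ) ^ (1/2:ℝ)) ^ 2 := by
        gcongr
        exact h
    _ = (∫⁻ x, u x ^ 2 ∂μ) * (∫⁻ x, v x ^ 2 ∂μ) := by
        rw [mul_pow, ← ENNReal.rpow_natCast (_ ^ (1/2:ℝ)) 2, ← ENNReal.rpow_natCast (_ ^ (1/2:ℝ)) 2,
          ← ENNReal.rpow_mul, ← ENNReal.rpow_mul]
        norm_num

/-- Hardy inequality, case `k < 1`: for `k < 1` there is a constant `C`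
depending only on `k` such that every `C¹` function `g` on `(0,1]` with finite weighted
integrals has a trace `g(0)` at `0`, and
`∫₀¹ s^(k-2) |g - g(0)|² ds ≤ C ∫₀¹ s^k |g'|² ds`. -/
theorem hardy_inequality_k_lt_one (k : ℝ) (hk : k < 1) :
    ∃ C : ℝ≥0, ∀ g g' : ℝ → ℝ,
      (∀ s ∈ Ioc (0 : ℝ) 1, HasDerivAt g (g' s) s) →
      ContinuousOn g' (Ioc (0 : ℝ) 1) →
      (∫⁻ s in Ioo (0 : ℝ) 1, ENNReal.ofReal (s ^ k * |g' s| ^ 2)) < ⊤ →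
      (∫⁻ s in Ioo (0 : ℝ) 1, ENNReal.ofReal (s ^ k * |g s| ^ 2)) < ⊤ →
      ∃ g0 : ℝ, Tendsto g (𝓝[>] (0 : ℝ)) (𝓝 g0) ∧
        (∫⁻ s in Ioo (0 : ℝ) 1, ENNReal.ofReal (s ^ (k - 2) * |g s - g0| ^ 2))
          ≤ C * ∫⁻ s in Ioo (0 : ℝ) 1, ENNReal.ofReal (s ^ k * |g' s| ^ 2) := by
  have hk' : (0:ℝ) < 1 - k := by linarith
  refine ⟨(4 / (1 - k)^2).toNNReal, fun g g' hderiv hg'c hY _hG => ?_⟩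
  have hg'm : AEMeasurable g' (volume.restrict (Ioo (0:ℝ) 1)) :=
    (hg'c.mono Ioo_subset_Ioc_self).aemeasurable measurableSet_Ioo
  have hIg' : IntegrableOn g' (Ioo (0:ℝ) 1) := by
    have hk' : (0:ℝ) < 1 - k := by linarith
    have humeas : AEMeasurable (fun σ : ℝ => ENNReal.ofReal (σ ^ (-k/2))) (volume.restrict (Ioo (0:ℝ) 1)) :=
      ((measurable_id'.pow_const (-k/2)).ennreal_ofReal).aemeasurable
    have hvmeas : AEMeasurable (fun σ : ℝ => ENNReal.ofReal (σ ^ (k/2) * |g' σ|)) (volume.restrict (Ioo (0:ℝ) 1)) :=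
      (((measurable_id'.pow_const (k/2)).aemeasurable.mul (continuous_abs.measurable.comp_aemeasurable hg'm))).ennreal_ofReal
    have hprod : ∀ᵐ σ ∂(volume.restrict (Ioo (0:ℝ) 1)),
        ENNReal.ofReal |g' σ| = ENNReal.ofReal (σ ^ (-k/2)) * ENNReal.ofReal (σ ^ (k/2) * |g' σ|) := by
      filter_upwards [ae_restrict_mem measurableSet_Ioo] with σ hσ
      rw [← ENNReal.ofReal_mul (Real.rpow_nonneg hσ.1.le _), ← mul_assoc, ← Real.rpow_add hσ.1]
      have h0 : -k/2 + k/2 = 0 := by ring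
      rw [h0, Real.rpow_zero, one_mul]
    have hCS := lint_CS humeas hvmeas
    have hu2 : (∫⁻ σ in Ioo (0:ℝ) 1, ENNReal.ofReal (σ ^ (-k/2)) ^ 2) < ⊤ := by
      have : ∀ᵐ σ ∂(volume.restrict (Ioo (0:ℝ) 1)),
          ENNReal.ofReal (σ ^ (-k/2)) ^ 2 = ENNReal.ofReal (σ ^ (-k)) := by
        filter_upwards [ae_restrict_mem measurableSet_Ioo] with σ hσ
        rw [← ENNReal.ofReal_pow (Real.rpow_nonneg hσ.1.le _), ← Real.rpow_natCast (σ ^ (-k/2)) 2,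
          ← Real.rpow_mul hσ.1.le]
        norm_num
      rw [lintegral_congr_ae this, lint_rpow_Ioo one_pos (by linarith)]
      exact ENNReal.ofReal_lt_top
    have hv2 : (∫⁻ σ in Ioo (0:ℝ) 1, ENNReal.ofReal (σ ^ (k/2) * |g' σ|) ^ 2) < ⊤ := by
      have : ∀ᵐ σ ∂(volume.restrict (Ioo (0:ℝ) 1)),
          ENNReal.ofReal (σ ^ (k/2) * |g' σ|) ^ 2 = ENNReal.ofReal (σ ^ k * |g' σ| ^ 2) := by
        filter_upwards [ae_restrict_mem measurableSet_Ioo] with σ hσ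
        rw [← ENNReal.ofReal_pow (mul_nonneg (Real.rpow_nonneg hσ.1.le _) (abs_nonneg _)), mul_pow, ← Real.rpow_natCast (σ ^ (k/2)) 2,
          ← Real.rpow_mul hσ.1.le]
        norm_num
      rw [lintegral_congr_ae this]
      exact hY
    have hsq : (∫⁻ σ in Ioo (0:ℝ) 1, ENNReal.ofReal |g' σ|) ^ 2 < ⊤ := by
      rw [lintegral_congr_ae hprod]
      exact hCS.trans_lt (ENNReal.mul_lt_top hu2 hv2)
    have hfin : (∫⁻ σ in Ioo (0:ℝ) 1, ENNReal.ofReal |g' σ|) < ⊤ := by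
      rw [lt_top_iff_ne_top]
      intro h
      rw [h] at hsq
      rw [pow_two, ENNReal.top_mul_top] at hsq
      exact lt_irrefl _ hsq
    refine ⟨hg'm.aestronglyMeasurable, ?_⟩
    rw [hasFiniteIntegral_iff_norm]
    simpa only [Real.norm_eq_abs] using hfin
  have hII : IntervalIntegrable g' volume 0 1 := by
    rw [intervalIntegrable_iff_integrableOn_Ioc_of_le zero_le_one]
    exact (integrableOn_Ioc_iff_integrableOn_Ioo).2 hIg'
  set g0 : ℝ := g 1 - ∫ σ in (0:ℝ)..1, g' σ with hg0
  have key : ∀ t ∈ Ioc (0:ℝ) 1, g t - g0 = ∫ σ in (0:ℝ)..t, g' σ := by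
    intro t ht
    have hsub : uIcc t 1 ⊆ Ioc (0:ℝ) 1 := by
      rw [uIcc_of_le ht.2]
      exact fun x hx => ⟨lt_of_lt_of_le ht.1 hx.1, hx.2⟩
    have h1 : ∫ σ in t..1, g' σ = g 1 - g t :=
      intervalIntegral.integral_eq_sub_of_hasDerivAt (fun x hx => hderiv x (hsub hx))
        (hII.mono_set (by rw [uIcc_of_le ht.2, uIcc_of_le zero_le_one]; exact Icc_subset_Icc ht.1.le le_rfl))
    have h2 : (∫ σ in (0:ℝ)..t, g' σ) + ∫ σ in t..1, g' σ = ∫ σ in (0:ℝ)..1, g' σ :=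
      intervalIntegral.integral_add_adjacent_intervals
        (hII.mono_set (by rw [uIcc_of_le ht.1.le, uIcc_of_le zero_le_one]; exact Icc_subset_Icc le_rfl ht.2))
        (hII.mono_set (by rw [uIcc_of_le ht.2, uIcc_of_le zero_le_one]; exact Icc_subset_Icc ht.1.le le_rfl))
    rw [hg0]
    linarith [h1, h2]
  have htends : Tendsto g (𝓝[>] (0:ℝ)) (𝓝 g0) := by
    have hIcc : IntegrableOn g' (Icc (0:ℝ) 1) := by
      rw [integrableOn_Icc_iff_integrableOn_Ioo]
      exact hIg'
    have hprim : ContinuousOn (fun x => ∫ σ in Ioc (0:ℝ) x, g' σ) (Icc (0:ℝ) 1) :=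
      intervalIntegral.continuousOn_primitive hIcc
    have h0 : Tendsto (fun x => ∫ σ in Ioc (0:ℝ) x, g' σ) (𝓝[Icc (0:ℝ) 1] 0) (𝓝 0) := by
      have h := hprim 0 ⟨le_rfl, zero_le_one⟩
      unfold ContinuousWithinAt at h
      convert h using 2
      simp
    have h0' : Tendsto (fun x => ∫ σ in Ioc (0:ℝ) x, g' σ) (𝓝[>] (0:ℝ)) (𝓝 0) := by
      refine h0.mono_left ?_
      rw [← nhdsWithin_Ioc_eq_nhdsGT (zero_lt_one' ℝ)]
      exact nhdsWithin_mono _ Ioc_subset_Icc_self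
    have heq : ∀ᶠ t in 𝓝[>] (0:ℝ), g0 + ∫ σ in Ioc (0:ℝ) t, g' σ = g t := by
      rw [← nhdsWithin_Ioc_eq_nhdsGT (zero_lt_one' ℝ)]
      filter_upwards [self_mem_nhdsWithin] with t ht
      have := key t ht
      rw [← intervalIntegral.integral_of_le ht.1.le] at *
      linarith [this]
    have := Tendsto.congr' heq ((tendsto_const_nhds.add h0').congr (fun t => rfl))
    simpa using this
  refine ⟨g0, htends, ?_⟩
  have key' : ∀ t ∈ Ioc (0:ℝ) 1, g t - g0 = ∫ σ in (0:ℝ)..t, g' σ := key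
  -- trace bound
  have habs : ∀ t ∈ Ioo (0:ℝ) 1, ENNReal.ofReal |g t - g0| ≤ ∫⁻ σ in Ioo (0:ℝ) t, ENNReal.ofReal |g' σ| := by
    intro t ht
    rw [key t ⟨ht.1, ht.2.le⟩]
    have hint : IntegrableOn (fun σ => |g' σ|) (Ioo (0:ℝ) t) :=
      (hIg'.mono_set (Ioo_subset_Ioo_right ht.2.le)).abs
    have h1 : |∫ σ in (0:ℝ)..t, g' σ| ≤ ∫ σ in Ioo (0:ℝ) t, |g' σ| := by
      calc |∫ σ in (0:ℝ)..t, g' σ| ≤ ∫ σ in (0:ℝ)..t, |g' σ| :=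
            intervalIntegral.abs_integral_le_integral_abs ht.1.le
        _ = ∫ σ in Ioo (0:ℝ) t, |g' σ| := by
            rw [intervalIntegral.integral_of_le ht.1.le, integral_Ioc_eq_integral_Ioo]
    calc ENNReal.ofReal |∫ σ in (0:ℝ)..t, g' σ| ≤ ENNReal.ofReal (∫ σ in Ioo (0:ℝ) t, |g' σ|) :=
          ENNReal.ofReal_le_ofReal h1
      _ = ∫⁻ σ in Ioo (0:ℝ) t, ENNReal.ofReal |g' σ| :=
          MeasureTheory.ofReal_integral_eq_lintegral_ofReal hint (ae_of_all _ fun x => abs_nonneg _)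
  -- the auxiliary density and its measurable version
  set f : ℝ → ℝ≥0∞ := fun σ => ENNReal.ofReal (σ ^ ((k+1)/2) * |g' σ|^2) with hfdef
  have habsm : AEMeasurable (fun σ => |g' σ|) (volume.restrict (Ioo (0:ℝ) 1)) :=
    continuous_abs.measurable.comp_aemeasurable hg'm
  have hfaem : AEMeasurable f (volume.restrict (Ioo (0:ℝ) 1)) :=
    ((measurable_id'.pow_const ((k+1)/2)).aemeasurable.mul (habsm.pow_const 2)).ennreal_ofReal
  set F := hfaem.mk f with hFdef
  have hFmeas : Measurable F := hfaem.measurable_mk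
  have hFeq : f =ᵐ[volume.restrict (Ioo (0:ℝ) 1)] F := hfaem.ae_eq_mk
  -- Cauchy–Schwarz on (0,t)
  have hCS : ∀ t ∈ Ioo (0:ℝ) 1, (∫⁻ σ in Ioo (0:ℝ) t, ENNReal.ofReal |g' σ|) ^ 2
      ≤ ENNReal.ofReal (t ^ ((1-k)/2) / ((1-k)/2)) * ∫⁻ σ in Ioo (0:ℝ) t, f σ := by
    intro t ht
    have hmem := ae_restrict_mem (μ := volume) (s := Ioo (0:ℝ) t) measurableSet_Ioo
    have l1 : ∫⁻ σ in Ioo (0:ℝ) t, ENNReal.ofReal |g' σ|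
        = ∫⁻ σ in Ioo (0:ℝ) t, ENNReal.ofReal (σ ^ (-(k+1)/4)) * ENNReal.ofReal (σ ^ ((k+1)/4) * |g' σ|) := by
      refine lintegral_congr_ae ?_
      filter_upwards [hmem] with σ hσ
      rw [← ENNReal.ofReal_mul (Real.rpow_nonneg hσ.1.le _), ← mul_assoc, ← Real.rpow_add hσ.1]
      have h0 : -(k+1)/4 + (k+1)/4 = 0 := by ring
      rw [h0, Real.rpow_zero, one_mul]
    have hg'mt : AEMeasurable g' (volume.restrict (Ioo (0:ℝ) t)) :=
      hg'm.mono_measure (Measure.restrict_mono (Ioo_subset_Ioo_right ht.2.le) le_rfl)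
    have l2 := lint_CS (μ := volume.restrict (Ioo (0:ℝ) t))
      (u := fun σ => ENNReal.ofReal (σ ^ (-(k+1)/4)))
      (v := fun σ => ENNReal.ofReal (σ ^ ((k+1)/4) * |g' σ|))
      ((measurable_id'.pow_const (-(k+1)/4)).ennreal_ofReal).aemeasurable
      (((measurable_id'.pow_const ((k+1)/4)).aemeasurable.mul
        (continuous_abs.measurable.comp_aemeasurable hg'mt)).ennreal_ofReal)
    have l3 : (∫⁻ σ in Ioo (0:ℝ) t, ENNReal.ofReal (σ ^ (-(k+1)/4)) ^ 2)
        = ENNReal.ofReal (t ^ ((1-k)/2) / ((1-k)/2)) := by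
      have : ∀ᵐ σ ∂(volume.restrict (Ioo (0:ℝ) t)),
          ENNReal.ofReal (σ ^ (-(k+1)/4)) ^ 2 = ENNReal.ofReal (σ ^ (-(k+1)/2)) := by
        filter_upwards [hmem] with σ hσ
        rw [← ENNReal.ofReal_pow (Real.rpow_nonneg hσ.1.le _), ← Real.rpow_natCast (σ ^ (-(k+1)/4)) 2,
          ← Real.rpow_mul hσ.1.le]
        have he : -(k+1)/4 * ((2:ℕ):ℝ) = -(k+1)/2 := by push_cast; ring
        rw [he]
      rw [lintegral_congr_ae this, lint_rpow_Ioo ht.1 (by linarith)]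
      congr 2 <;> ring
    have l4 : (∫⁻ σ in Ioo (0:ℝ) t, ENNReal.ofReal (σ ^ ((k+1)/4) * |g' σ|) ^ 2)
        = ∫⁻ σ in Ioo (0:ℝ) t, f σ := by
      refine lintegral_congr_ae ?_
      filter_upwards [hmem] with σ hσ
      rw [hfdef]
      rw [← ENNReal.ofReal_pow (mul_nonneg (Real.rpow_nonneg hσ.1.le _) (abs_nonneg _)), mul_pow,
        ← Real.rpow_natCast (σ ^ ((k+1)/4)) 2, ← Real.rpow_mul hσ.1.le]
      have he : (k+1)/4 * ((2:ℕ):ℝ) = (k+1)/2 := by push_cast; ring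
      rw [he]
    rw [l1, ← l3, ← l4]
    exact l2
  -- pointwise main bound
  have hpt : ∀ t ∈ Ioo (0:ℝ) 1, ENNReal.ofReal (t ^ (k-2) * |g t - g0| ^ 2)
      ≤ ENNReal.ofReal (2/(1-k)) * (ENNReal.ofReal (t ^ ((k-3)/2)) * ∫⁻ σ in Ioo (0:ℝ) t, F σ) := by
    intro t ht
    have hfF : (∫⁻ σ in Ioo (0:ℝ) t, f σ) = ∫⁻ σ in Ioo (0:ℝ) t, F σ :=
      lintegral_congr_ae (ae_restrict_of_ae_restrict_of_subset (Ioo_subset_Ioo_right ht.2.le) hFeq)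
    have e1 : ENNReal.ofReal (t ^ (k-2) * |g t - g0| ^ 2)
        = ENNReal.ofReal (t ^ (k-2)) * ENNReal.ofReal |g t - g0| ^ 2 := by
      rw [ENNReal.ofReal_mul (Real.rpow_nonneg ht.1.le _), ENNReal.ofReal_pow (abs_nonneg _)]
    calc ENNReal.ofReal (t ^ (k-2) * |g t - g0| ^ 2)
        ≤ ENNReal.ofReal (t ^ (k-2)) * (∫⁻ σ in Ioo (0:ℝ) t, ENNReal.ofReal |g' σ|) ^ 2 := by
          rw [e1]; gcongr; exact habs t ht
      _ ≤ ENNReal.ofReal (t ^ (k-2)) *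
            (ENNReal.ofReal (t ^ ((1-k)/2) / ((1-k)/2)) * ∫⁻ σ in Ioo (0:ℝ) t, f σ) := by
          gcongr
          exact hCS t ht
      _ = ENNReal.ofReal (2/(1-k)) * (ENNReal.ofReal (t ^ ((k-3)/2)) * ∫⁻ σ in Ioo (0:ℝ) t, F σ) := by
          rw [hfF, ← mul_assoc, ← mul_assoc, ← ENNReal.ofReal_mul (Real.rpow_nonneg ht.1.le _),
            ← ENNReal.ofReal_mul (by positivity : (0:ℝ) ≤ 2/(1-k))]
          congr 2
          rw [div_eq_mul_inv (t ^ ((1-k)/2)), ← mul_assoc, ← Real.rpow_add ht.1]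
          have h1 : k - 2 + (1-k)/2 = (k-3)/2 := by ring
          have h2 : ((1-k)/2)⁻¹ = 2/(1-k) := by
            rw [inv_div]
          rw [h1, h2]
          ring
  -- reduce to T
  have hmono : (∫⁻ s in Ioo (0:ℝ) 1, ENNReal.ofReal (s ^ (k - 2) * |g s - g0| ^ 2))
      ≤ ∫⁻ t in Ioo (0:ℝ) 1, ENNReal.ofReal (2/(1-k)) *
        (ENNReal.ofReal (t ^ ((k-3)/2)) * ∫⁻ σ in Ioo (0:ℝ) t, F σ) := by
    refine lintegral_mono_ae ?_
    filter_upwards [ae_restrict_mem measurableSet_Ioo] with t ht using hpt t ht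
  set T := ∫⁻ t in Ioo (0:ℝ) 1, ENNReal.ofReal (t ^ ((k-3)/2)) * ∫⁻ σ in Ioo (0:ℝ) t, F σ with hT
  have hconst : (∫⁻ t in Ioo (0:ℝ) 1, ENNReal.ofReal (2/(1-k)) *
      (ENNReal.ofReal (t ^ ((k-3)/2)) * ∫⁻ σ in Ioo (0:ℝ) t, F σ)) = ENNReal.ofReal (2/(1-k)) * T :=
    lintegral_const_mul' _ _ ENNReal.ofReal_ne_top
  set W : ℝ × ℝ → ℝ≥0∞ := fun q =>
    Set.indicator {q : ℝ × ℝ | q.2 < q.1} (fun q => ENNReal.ofReal (q.1 ^ ((k-3)/2)) * F q.2) q with hW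
  have hWmeas : Measurable W :=
    Measurable.indicator ((measurable_fst.pow_const _).ennreal_ofReal.mul
      (hFmeas.comp measurable_snd)) (measurableSet_lt measurable_snd measurable_fst)
  have hA : ∀ t ∈ Ioo (0:ℝ) 1, ENNReal.ofReal (t ^ ((k-3)/2)) * ∫⁻ σ in Ioo (0:ℝ) t, F σ
      = ∫⁻ σ in Ioo (0:ℝ) 1, W (t, σ) := by
    intro t ht
    have hident : ∀ σ : ℝ, W (t, σ)
        = (Iio t).indicator (fun σ => ENNReal.ofReal (t ^ ((k-3)/2)) * F σ) σ := by
      intro σ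
      rw [hW]
      by_cases h : σ < t
      · simp [Set.indicator_apply, Set.mem_setOf_eq, Set.mem_Iio, h]
      · simp [Set.indicator_apply, Set.mem_setOf_eq, Set.mem_Iio, h]
    have hset : Iio t ∩ Ioo (0:ℝ) 1 = Ioo 0 t := by
      ext σ; simp only [mem_inter_iff, mem_Iio, mem_Ioo]
      constructor
      · rintro ⟨h1, h2, h3⟩; exact ⟨h2, h1⟩
      · rintro ⟨h1, h2⟩; exact ⟨h2, h1, h2.trans ht.2⟩
    rw [lintegral_congr hident, lintegral_indicator measurableSet_Iio,
      Measure.restrict_restrict measurableSet_Iio, hset,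
      lintegral_const_mul' _ _ ENNReal.ofReal_ne_top]
  have hB : ∀ σ ∈ Ioo (0:ℝ) 1, (∫⁻ t in Ioo (0:ℝ) 1, W (t, σ))
      = F σ * ∫⁻ t in Ioo σ 1, ENNReal.ofReal (t ^ ((k-3)/2)) := by
    intro σ hσ
    have hident : ∀ t : ℝ, W (t, σ)
        = (Ioi σ).indicator (fun t => F σ * ENNReal.ofReal (t ^ ((k-3)/2))) t := by
      intro t
      rw [hW]
      by_cases h : σ < t
      · simp [Set.indicator_apply, Set.mem_setOf_eq, Set.mem_Ioi, h, mul_comm]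
      · simp [Set.indicator_apply, Set.mem_setOf_eq, Set.mem_Ioi, h]
    have hset : Ioi σ ∩ Ioo (0:ℝ) 1 = Ioo σ 1 := by
      ext t; simp only [mem_inter_iff, mem_Ioi, mem_Ioo]
      constructor
      · rintro ⟨h1, h2, h3⟩; exact ⟨h1, h3⟩
      · rintro ⟨h1, h2⟩; exact ⟨h1, hσ.1.trans h1, h2⟩
    rw [lintegral_congr hident, lintegral_indicator measurableSet_Ioi,
      Measure.restrict_restrict measurableSet_Ioi, hset,
      lintegral_const_mul _ ((measurable_id'.pow_const _).ennreal_ofReal)]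
  have hswap : T = ∫⁻ σ in Ioo (0:ℝ) 1, F σ * ∫⁻ t in Ioo σ 1, ENNReal.ofReal (t ^ ((k-3)/2)) := by
    rw [hT, setLIntegral_congr_fun measurableSet_Ioo hA,
      lintegral_lintegral_swap hWmeas.aemeasurable,
      setLIntegral_congr_fun measurableSet_Ioo hB]
  have hTbound : T ≤ ENNReal.ofReal (2/(1-k)) *
      ∫⁻ s in Ioo (0:ℝ) 1, ENNReal.ofReal (s ^ k * |g' s| ^ 2) := by
    rw [hswap]
    have step : ∀ᵐ σ ∂(volume.restrict (Ioo (0:ℝ) 1)),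
        F σ * (∫⁻ t in Ioo σ 1, ENNReal.ofReal (t ^ ((k-3)/2)))
          ≤ ENNReal.ofReal (2/(1-k)) * ENNReal.ofReal (σ ^ k * |g' σ| ^ 2) := by
      filter_upwards [ae_restrict_mem measurableSet_Ioo, hFeq] with σ hσ hFσ
      rw [← hFσ]
      calc f σ * (∫⁻ t in Ioo σ 1, ENNReal.ofReal (t ^ ((k-3)/2)))
          ≤ f σ * ENNReal.ofReal (σ ^ ((k-3)/2+1) * (-((k-3)/2+1))⁻¹) := by
            gcongr
            exact lint_rpow_Ioo_upper hσ.1 hσ.2 (by linarith)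
        _ = ENNReal.ofReal (2/(1-k)) * ENNReal.ofReal (σ ^ k * |g' σ| ^ 2) := by
            rw [hfdef]
            rw [← ENNReal.ofReal_mul (mul_nonneg (Real.rpow_nonneg hσ.1.le _)
                (pow_nonneg (abs_nonneg _) 2)),
              ← ENNReal.ofReal_mul (by positivity : (0:ℝ) ≤ 2/(1-k))]
            congr 1
            have h1 : (k-3)/2 + 1 = (k-1)/2 := by ring
            have h2 : (-((k-1)/2))⁻¹ = 2/(1-k) := by
              rw [show -((k-1)/2) = (1-k)/2 by ring, inv_div]
            have h3 : σ ^ ((k+1)/2) * σ ^ ((k-1)/2) = σ ^ k := by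
              rw [← Real.rpow_add hσ.1]; congr 1; ring
            rw [h1, h2]
            linear_combination (|g' σ|^2 * (2/(1-k))) * h3
    calc ∫⁻ σ in Ioo (0:ℝ) 1, F σ * ∫⁻ t in Ioo σ 1, ENNReal.ofReal (t ^ ((k-3)/2))
        ≤ ∫⁻ σ in Ioo (0:ℝ) 1,
            ENNReal.ofReal (2/(1-k)) * ENNReal.ofReal (σ ^ k * |g' σ| ^ 2) :=
          lintegral_mono_ae step
      _ = _ := lintegral_const_mul' _ _ ENNReal.ofReal_ne_top
  have hCoe : (((4 / (1 - k)^2).toNNReal : ℝ≥0) : ℝ≥0∞) = ENNReal.ofReal (4/(1-k)^2) := rfl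
  rw [hCoe]
  calc (∫⁻ s in Ioo (0:ℝ) 1, ENNReal.ofReal (s ^ (k - 2) * |g s - g0| ^ 2))
      ≤ ENNReal.ofReal (2/(1-k)) * T := hmono.trans (le_of_eq hconst)
    _ ≤ ENNReal.ofReal (2/(1-k)) * (ENNReal.ofReal (2/(1-k)) *
          ∫⁻ s in Ioo (0:ℝ) 1, ENNReal.ofReal (s ^ k * |g' s| ^ 2)) := by gcongr
    _ = ENNReal.ofReal (4/(1-k)^2) *
          ∫⁻ s in Ioo (0:ℝ) 1, ENNReal.ofReal (s ^ k * |g' s| ^ 2) := by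
        rw [← mul_assoc, ← ENNReal.ofReal_mul (by positivity : (0:ℝ) ≤ 2/(1-k))]
        congr 2
        field_simp
        ring
end
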